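/- Let T : X → Y be a strictly singular operator between Banach spaces and let ε > 0. If X is infinite-dimensional, then there exists an infinite-dimensional closed subspace A ⊆ X such that the restriction T|A has operator norm at most ε. -/

import Mathlib

/-- A bounded linear operator between normed spaces is *strictly singular* if its restriction
to every infinite-dimensional closed subspace fails to be bounded below. -/
def StrictlySingular {X Y : Type*} [NormedAddCommGroup X] [NormedSpace ℝ X]
    [NormedAddCommGroup Y] [NormedSpace ℝ Y] (T : X →L[ℝ] Y) : Prop :=
  ∀ Z : Submodule ℝ X, IsClosed (Z : Set X) → ¬ FiniteDimensional ℝ Z →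
    ¬ ∃ c : ℝ, 0 < c ∧ ∀ z ∈ Z, c * ‖z‖ ≤ ‖T z‖

section Aux

variable {X Y : Type*} [NormedAddCommGroup X] [NormedSpace ℝ X]
    [NormedAddCommGroup Y] [NormedSpace ℝ Y]

/-- If `Z` is infinite-dimensional and `f` a continuous linear functional, then
`Z ⊓ ker f` is infinite-dimensional. -/
lemma aux_not_fd_inf_ker (Z : Submodule ℝ X) (hZ : ¬ FiniteDimensional ℝ Z)
    (f : X →L[ℝ] ℝ) : ¬ FiniteDimensional ℝ (Z ⊓ LinearMap.ker (f : X →ₗ[ℝ] ℝ) : Submodule ℝ X) := by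
  intro h
  apply hZ
  set g : Z →ₗ[ℝ] ℝ := (f : X →ₗ[ℝ] ℝ).domRestrict Z with hg
  have hkerg : LinearMap.ker g = Submodule.comap Z.subtype (LinearMap.ker (f : X →ₗ[ℝ] ℝ)) :=
    LinearMap.ker_domRestrict Z _
  have hmap : Submodule.map Z.subtype (LinearMap.ker g)
      = Z ⊓ LinearMap.ker (f : X →ₗ[ℝ] ℝ) := by
    rw [hkerg, Submodule.map_comap_subtype]
  have hker_fd : FiniteDimensional ℝ (LinearMap.ker g) := by
    have e := Submodule.equivMapOfInjective Z.subtype Z.injective_subtype (LinearMap.ker g)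
    rw [hmap] at e
    have : FiniteDimensional ℝ (Z ⊓ LinearMap.ker (f : X →ₗ[ℝ] ℝ) : Submodule ℝ X) := h
    exact Module.Finite.equiv e.symm
  have hrange_fd : FiniteDimensional ℝ (LinearMap.range g) :=
    FiniteDimensional.finiteDimensional_submodule _
  have hrank := LinearMap.lift_rank_range_add_rank_ker g
  have hlt : Module.rank ℝ Z < Cardinal.aleph0 := by
    rw [← Cardinal.lift_lt_aleph0, ← hrank]
    refine Cardinal.add_lt_aleph0 ?_ ?_ <;> rw [Cardinal.lift_lt_aleph0] <;>
      exact Module.rank_lt_aleph0 ℝ _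
  exact Module.rank_lt_aleph0_iff.mp hlt

end Aux

section Seq

variable {X Y : Type*} [NormedAddCommGroup X] [NormedSpace ℝ X]
    [NormedAddCommGroup Y] [NormedSpace ℝ Y]

/-- The key construction: a biorthogonal-like system `x n`, `f n` with small `‖T (x n)‖`. -/
lemma exists_good_seq (T : X →L[ℝ] Y) (hT : StrictlySingular T)
    (hX : ¬ FiniteDimensional ℝ X) (δ : ℕ → ℝ) (hδ : ∀ n, 0 < δ n) :
    ∃ (x : ℕ → X) (f : ℕ → X →L[ℝ] ℝ),
      (∀ n, ‖x n‖ = 1) ∧ (∀ n, ‖T (x n)‖ ≤ δ n) ∧ (∀ n, ‖f n‖ = 1) ∧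
      (∀ n, f n (x n) = 1) ∧ (∀ i j, i < j → f i (x j) = 0) := by
  classical
  -- From strict singularity: in every infinite-dim closed subspace there is a unit vector
  -- with small image, together with a norming functional.
  have key : ∀ Z : Submodule ℝ X, IsClosed (Z : Set X) → ¬ FiniteDimensional ℝ Z → ∀ n : ℕ,
      ∃ p : X × (X →L[ℝ] ℝ), p.1 ∈ Z ∧ ‖p.1‖ = 1 ∧ ‖T p.1‖ ≤ δ n ∧ ‖p.2‖ = 1 ∧
        p.2 p.1 = 1 := by
    intro Z hc hfd n
    have h := hT Z hc hfd
    push_neg at h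
    obtain ⟨z, hzZ, hz⟩ := h (δ n) (hδ n)
    have hz0 : z ≠ 0 := by
      rintro rfl
      simp at hz
    have hnz : (0:ℝ) < ‖z‖ := norm_pos_iff.mpr hz0
    set x : X := ‖z‖⁻¹ • z with hx
    have hxZ : x ∈ Z := Z.smul_mem _ hzZ
    have hxnorm : ‖x‖ = 1 := by
      rw [hx, norm_smul, norm_inv, norm_norm, inv_mul_cancel₀ hnz.ne']
    have hx0 : x ≠ 0 := by
      intro h0; rw [h0, norm_zero] at hxnorm; norm_num at hxnorm
    have hTx : ‖T x‖ ≤ δ n := by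
      rw [hx, map_smul, norm_smul, norm_inv, norm_norm]
      rw [inv_mul_le_iff₀ hnz]
      exact (mul_comm (δ n) ‖z‖ ▸ hz.le)
    obtain ⟨g, hg1, hgx⟩ := exists_dual_vector ℝ x (norm_ne_zero_iff.mpr hx0)
    exact ⟨(x, g), hxZ, hxnorm, hTx, hg1, by rw [hgx, hxnorm]; norm_num⟩
  -- iterate
  let St := {Z : Submodule ℝ X // IsClosed (Z : Set X) ∧ ¬ FiniteDimensional ℝ Z}
  let pick : St → ℕ → X × (X →L[ℝ] ℝ) := fun Z n => (key Z.1 Z.2.1 Z.2.2 n).choose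
  have pick_spec : ∀ (Z : St) (n : ℕ), (pick Z n).1 ∈ Z.1 ∧ ‖(pick Z n).1‖ = 1 ∧
      ‖T (pick Z n).1‖ ≤ δ n ∧ ‖(pick Z n).2‖ = 1 ∧ (pick Z n).2 (pick Z n).1 = 1 :=
    fun Z n => (key Z.1 Z.2.1 Z.2.2 n).choose_spec
  have htop : ¬ FiniteDimensional ℝ (⊤ : Submodule ℝ X) := by
    intro h
    exact hX (Module.Finite.equiv Submodule.topEquiv)
  let next : St → ℕ → St := fun Z n =>
    ⟨Z.1 ⊓ LinearMap.ker ((pick Z n).2 : X →ₗ[ℝ] ℝ),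
     by
      have : (↑(Z.1 ⊓ LinearMap.ker ((pick Z n).2 : X →ₗ[ℝ] ℝ)) : Set X)
          = (Z.1 : Set X) ∩ (LinearMap.ker ((pick Z n).2 : X →ₗ[ℝ] ℝ) : Set X) := rfl
      rw [this]
      exact Z.2.1.inter (ContinuousLinearMap.isClosed_ker (pick Z n).2),
     aux_not_fd_inf_ker Z.1 Z.2.2 (pick Z n).2⟩
  let g : ℕ → St := fun n => Nat.rec ⟨⊤, isClosed_univ.mono (by simp), htop⟩
    (fun m Z => next Z m) n
  have hg_succ : ∀ n, (g (n+1)).1 = (g n).1 ⊓ LinearMap.ker ((pick (g n) n).2 : X →ₗ[ℝ] ℝ) :=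
    fun n => rfl
  let x : ℕ → X := fun n => (pick (g n) n).1
  let f : ℕ → X →L[ℝ] ℝ := fun n => (pick (g n) n).2
  have hmem : ∀ n, x n ∈ (g n).1 := fun n => (pick_spec (g n) n).1
  have hanti : ∀ i j, i ≤ j → (g j).1 ≤ (g i).1 := by
    intro i j hij
    induction j with
    | zero => simp_all
    | succ m ih =>
      rcases Nat.lt_or_ge i (m+1) with h | h
      · exact le_trans (by rw [hg_succ m]; exact inf_le_left) (ih (Nat.lt_succ_iff.mp h))
      · have : i = m + 1 := le_antisymm hij h
        subst this; exact le_rfl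
  refine ⟨x, f, fun n => (pick_spec (g n) n).2.1, fun n => (pick_spec (g n) n).2.2.1,
    fun n => (pick_spec (g n) n).2.2.2.1, fun n => (pick_spec (g n) n).2.2.2.2, ?_⟩
  intro i j hij
  have h1 : x j ∈ (g (i+1)).1 := hanti (i+1) j hij (hmem j)
  rw [hg_succ i] at h1
  exact h1.2

end Seq

theorem strictlySingular_exists_subspace_small_norm
    {X Y : Type*} [NormedAddCommGroup X] [NormedSpace ℝ X] [CompleteSpace X]
    [NormedAddCommGroup Y] [NormedSpace ℝ Y] [CompleteSpace Y]
    (T : X →L[ℝ] Y) (hT : StrictlySingular T)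
    (hX : ¬ FiniteDimensional ℝ X) (ε : ℝ) (hε : 0 < ε) :
    ∃ A : Submodule ℝ X, IsClosed (A : Set X) ∧ ¬ FiniteDimensional ℝ A ∧
      ∀ x ∈ A, ‖T x‖ ≤ ε * ‖x‖ := by
  classical
  obtain ⟨x, f, hx1, hTx, hf1, hfx, hftri⟩ := exists_good_seq T hT hX
    (fun n => ε/4 * (4:ℝ)⁻¹ ^ n) (fun n => by positivity)
  -- coefficient bound
  have coeff_bound : ∀ (c : ℕ →₀ ℝ), ∀ k : ℕ,
      |c k| ≤ 2 ^ k * ‖c.sum fun i a => a • x i‖ := by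
    intro c
    set v : X := c.sum fun i a => a • x i with hv
    intro k
    induction k using Nat.strong_induction_on with
    | _ k ih =>
      -- f k v = ∑_{i ∈ range (k+1)} c i * f k (x i)
      have hfv : f k v = ∑ i ∈ Finset.range (k+1), c i * f k (x i) := by
        have h1 : f k v = ∑ i ∈ c.support, c i * f k (x i) := by
          rw [hv, map_finsuppSum]
          simp only [Finsupp.sum, map_smul, smul_eq_mul]
        have h2 : ∑ i ∈ c.support, c i * f k (x i)
            = ∑ i ∈ c.support ∩ Finset.range (k+1), c i * f k (x i) := by
          refine (Finset.sum_subset Finset.inter_subset_left ?_).symm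
          intro i hi hni
          have hki : k < i := by
            by_contra hle
            exact hni (Finset.mem_inter.mpr ⟨hi, Finset.mem_range.mpr (by omega)⟩)
          rw [hftri k i hki, mul_zero]
        have h3 : ∑ i ∈ c.support ∩ Finset.range (k+1), c i * f k (x i)
            = ∑ i ∈ Finset.range (k+1), c i * f k (x i) := by
          refine Finset.sum_subset Finset.inter_subset_right ?_
          intro i hi hni
          have hns : i ∉ c.support := fun hs => hni (Finset.mem_inter.mpr ⟨hs, hi⟩)
          rw [Finsupp.notMem_support_iff.mp hns, zero_mul]
        rw [h1, h2, h3]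
      have hck : c k = f k v - ∑ i ∈ Finset.range k, c i * f k (x i) := by
        rw [hfv, Finset.sum_range_succ, hfx k, mul_one]
        ring
      have hbound : |c k| ≤ ‖v‖ + ∑ i ∈ Finset.range k, |c i| := by
        rw [hck]
        refine (abs_sub _ _).trans ?_
        gcongr
        · calc |f k v| ≤ ‖f k‖ * ‖v‖ := (f k).le_opNorm v
            _ = ‖v‖ := by rw [hf1 k, one_mul]
        · refine (Finset.abs_sum_le_sum_abs _ _).trans ?_
          apply Finset.sum_le_sum
          intro i _
          rw [abs_mul]
          have : |f k (x i)| ≤ 1 := by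
            calc |f k (x i)| ≤ ‖f k‖ * ‖x i‖ := (f k).le_opNorm (x i)
              _ = 1 := by rw [hf1 k, hx1 i, mul_one]
          calc |c i| * |f k (x i)| ≤ |c i| * 1 := by gcongr
            _ = |c i| := mul_one _
      have hsum : ∑ i ∈ Finset.range k, |c i| ≤ (2 ^ k - 1) * ‖v‖ := by
        have h2 : ∑ i ∈ Finset.range k, (2:ℝ) ^ i = 2 ^ k - 1 := by
          have := geom_sum_eq (by norm_num : (2:ℝ) ≠ 1) k
          rw [this]; ring
        calc ∑ i ∈ Finset.range k, |c i| ≤ ∑ i ∈ Finset.range k, 2 ^ i * ‖v‖ := by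
              apply Finset.sum_le_sum
              intro i hi
              exact ih i (Finset.mem_range.mp hi)
          _ = (2 ^ k - 1) * ‖v‖ := by rw [← Finset.sum_mul, h2]
      calc |c k| ≤ ‖v‖ + (2 ^ k - 1) * ‖v‖ := by
            refine hbound.trans ?_; gcongr
        _ = 2 ^ k * ‖v‖ := by ring
  -- linear independence of x
  have hli : LinearIndependent ℝ x := by
    rw [linearIndependent_iff]
    intro l hl
    have hlv : (l.sum fun i a => a • x i) = 0 := by
      rw [← Finsupp.linearCombination_apply]; exact hl
    ext k
    have h := coeff_bound l k
    rw [hlv, norm_zero, mul_zero] at h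
    simpa using abs_eq_zero.mp (le_antisymm h (abs_nonneg _))
  -- norm estimate on the span
  have hspan : ∀ v ∈ Submodule.span ℝ (Set.range x), ‖T v‖ ≤ ε * ‖v‖ := by
    intro v hv
    rw [Finsupp.mem_span_range_iff_exists_finsupp] at hv
    obtain ⟨c, rfl⟩ := hv
    set v : X := c.sum fun i a => a • x i with hv
    have hTv : T v = c.sum fun i a => a • T (x i) := by
      rw [hv, map_finsuppSum]
      simp only [Finsupp.sum, map_smul]
    rw [hTv]
    calc ‖c.sum fun i a => a • T (x i)‖
        ≤ ∑ i ∈ c.support, ‖c i • T (x i)‖ := norm_sum_le _ _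
      _ ≤ ∑ i ∈ c.support, (ε/4) * (1/2 : ℝ) ^ i * ‖v‖ := by
          apply Finset.sum_le_sum
          intro i _
          rw [norm_smul, Real.norm_eq_abs]
          calc |c i| * ‖T (x i)‖ ≤ (2 ^ i * ‖v‖) * (ε/4 * (4:ℝ)⁻¹ ^ i) := by
                have h1 := coeff_bound c i
                have h2 := hTx i
                exact mul_le_mul h1 h2 (norm_nonneg _) (by positivity)
            _ = (ε/4) * (1/2 : ℝ) ^ i * ‖v‖ := by
                have hp : (2:ℝ) ^ i * (4:ℝ)⁻¹ ^ i = (1/2 : ℝ) ^ i := by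
                  rw [← mul_pow]; norm_num
                linear_combination (ε/4 * ‖v‖) * hp
      _ = (ε/4) * (∑ i ∈ c.support, (1/2 : ℝ) ^ i) * ‖v‖ := by
          rw [Finset.mul_sum, Finset.sum_mul]
      _ ≤ (ε/4) * 2 * ‖v‖ := by
          gcongr
          obtain ⟨n, hn⟩ := Finset.exists_nat_subset_range c.support
          calc ∑ i ∈ c.support, (1/2 : ℝ) ^ i
              ≤ ∑ i ∈ Finset.range n, (1/2 : ℝ) ^ i :=
                Finset.sum_le_sum_of_subset_of_nonneg hn (fun i _ _ => by positivity)
            _ ≤ 2 := sum_geometric_two_le n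
      _ ≤ ε * ‖v‖ := by nlinarith [norm_nonneg v]
  -- the subspace
  refine ⟨(Submodule.span ℝ (Set.range x)).topologicalClosure,
    Submodule.isClosed_topologicalClosure _, ?_, ?_⟩
  · intro hfd
    have hmem : ∀ n, x n ∈ (Submodule.span ℝ (Set.range x)).topologicalClosure :=
      fun n => Submodule.le_topologicalClosure _ (Submodule.subset_span (Set.mem_range_self n))
    set A := (Submodule.span ℝ (Set.range x)).topologicalClosure with hA
    let x' : ℕ → A := fun n => ⟨x n, hmem n⟩
    have hli' : LinearIndependent ℝ x' := by
      have : x = (A.subtype : A →ₗ[ℝ] X) ∘ x' := rfl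
      rw [this] at hli
      exact LinearIndependent.of_comp _ hli
    haveI : Finite ℕ := hli'.finite
    exact not_finite ℕ
  · intro v hv
    have hclosed : IsClosed {v : X | ‖T v‖ ≤ ε * ‖v‖} :=
      isClosed_le (by fun_prop) (by fun_prop)
    have hsub : (Submodule.span ℝ (Set.range x) : Set X) ⊆ {v : X | ‖T v‖ ≤ ε * ‖v‖} :=
      fun w hw => hspan w hw
    have hmin := closure_minimal hsub hclosed
    have hv' : v ∈ closure (Submodule.span ℝ (Set.range x) : Set X) := by
      rw [← Submodule.topologicalClosure_coe]; exact hv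
    exact hmin hv'
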